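/- If P is an additively homogeneous closed subset of 2^ω with constant c (i.e., |θ_P(σ) − θ_P(τ)| ≤ c whenever σ, τ ∈ T_P have the same length), then for every n and every σ ∈ T_P↾n, |θ_P(σ) − log₂ #(T_P↾n)| ≤ c. -/

import Mathlib

open MeasureTheory Filter

noncomputable section

/-- The cylinder (basic clopen set) determined by a finite binary string. -/
def cyl (σ : List Bool) : Set (ℕ → Bool) :=
  {X | ∀ i, i < σ.length → X i = σ.getD i false}

/-- σ is an extendible node of P, i.e. σ ∈ T_P. -/
def extn (P : Set (ℕ → Bool)) (σ : List Bool) : Prop :=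
  (cyl σ ∩ P).Nonempty

/-- The level-n strings of the tree of extendible nodes, T_P ↾ n. -/
def level (P : Set (ℕ → Bool)) (n : ℕ) : Set (List Bool) :=
  {σ | σ.length = n ∧ extn P σ}

/-- #(T_P ↾ n). -/
def levelCard (P : Set (ℕ → Bool)) (n : ℕ) : ℕ :=
  (level P n).ncard

/-- The clopen set [T_P ↾ n] generated by the level-n extendible nodes. -/
def levelUnion (P : Set (ℕ → Bool)) (n : ℕ) : Set (ℕ → Bool) :=
  ⋃ σ ∈ level P n, cyl σ

/-- The prefix of σ of length m+1 with its last bit flipped, i.e. (σ↾(m+1))^↷. -/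
def flipAt (σ : List Bool) (m : ℕ) : List Bool :=
  σ.take m ++ [!σ.getD m false]

/-- θ_P(σ): the number of initial segments of σ whose last-bit-flipped sibling is in T_P. -/
def theta (P : Set (ℕ → Bool)) (σ : List Bool) : ℕ :=
  {m | m < σ.length ∧ extn P (flipAt σ m)}.ncard

/-- The number of extensions of σ in T_P ↾ n. -/
def extCard (P : Set (ℕ → Bool)) (σ : List Bool) (n : ℕ) : ℕ :=
  {τ | τ.length = n ∧ extn P τ ∧ σ <+: τ}.ncard

/-- X ↾ n as a finite string. -/
def prefixList (X : ℕ → Bool) (n : ℕ) : List Bool :=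
  List.ofFn (fun i : Fin n => X i)

/-- Interleaving X ⊕ Y of two infinite sequences. -/
def seqInterleave (X Y : ℕ → Bool) : ℕ → Bool :=
  fun n => if n % 2 = 0 then X (n / 2) else Y (n / 2)

/-- Interleaving σ ⊕ τ of two finite strings (of equal length). -/
def interleave : List Bool → List Bool → List Bool
  | a :: σ, b :: τ => a :: b :: interleave σ τ
  | _, _ => []

/-- The product P₀ ⊗ P₁ = {X ⊕ Y : X ∈ P₀, Y ∈ P₁}. -/
def prodClass (P₀ P₁ : Set (ℕ → Bool)) : Set (ℕ → Bool) :=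
  {Z | ∃ X ∈ P₀, ∃ Y ∈ P₁, Z = seqInterleave X Y}


open Classical

namespace Aux

variable (P : Set (ℕ → Bool))

lemma getD_app_left (σ l : List Bool) (i : ℕ) (h : i < σ.length) :
    (σ ++ l).getD i false = σ.getD i false := by
  simp [List.getD, List.getElem?_append_left h]

lemma getD_app_last (σ : List Bool) (b : Bool) :
    (σ ++ [b]).getD σ.length false = b := by
  simp [List.getD, List.getElem?_append_right]

/-- flipAt of an extended string agrees below the last position. -/
lemma flipAt_append (σ : List Bool) (b : Bool) (m : ℕ) (h : m < σ.length) :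
    flipAt (σ ++ [b]) m = flipAt σ m := by
  unfold flipAt
  rw [List.take_append_of_le_length h.le, getD_app_left σ [b] m h]

lemma flipAt_append_last (σ : List Bool) (b : Bool) :
    flipAt (σ ++ [b]) σ.length = σ ++ [!b] := by
  unfold flipAt
  rw [List.take_append_of_le_length le_rfl, List.take_length, getD_app_last]

/-- theta via a Finset. -/
lemma theta_eq_card (σ : List Bool) :
    theta P σ = ((Finset.range σ.length).filter (fun m => extn P (flipAt σ m))).card := by
  rw [theta, ← Set.ncard_coe_finset]
  congr 1
  ext m
  simp [Finset.mem_filter, and_comm]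

lemma theta_le (σ : List Bool) : theta P σ ≤ σ.length := by
  rw [theta_eq_card]
  calc _ ≤ (Finset.range σ.length).card := Finset.card_filter_le _ _
    _ = σ.length := Finset.card_range _

/-- theta recursion. -/
lemma theta_append (σ : List Bool) (b : Bool) :
    theta P (σ ++ [b]) = theta P σ + (if extn P (σ ++ [!b]) then 1 else 0) := by
  rw [theta_eq_card, theta_eq_card]
  simp only [List.length_append, List.length_singleton]
  rw [Finset.range_add_one, Finset.filter_insert]
  have hfl : ∀ m ∈ Finset.range σ.length,
      extn P (flipAt (σ ++ [b]) m) = extn P (flipAt σ m) := by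
    intro m hm
    rw [flipAt_append σ b m (Finset.mem_range.mp hm)]
  rw [Finset.filter_congr (fun m hm => by rw [hfl m hm]), flipAt_append_last]
  by_cases h : extn P (σ ++ [!b]) <;>
    simp [h, Finset.card_insert_of_notMem, Finset.notMem_range_self]

lemma cyl_mono (σ : List Bool) (b : Bool) : cyl (σ ++ [b]) ⊆ cyl σ := by
  intro X hX i hi
  have := hX i (by simp; omega)
  rwa [getD_app_left σ [b] i hi] at this

lemma extn_of_append (σ : List Bool) (b : Bool) (h : extn P (σ ++ [b])) : extn P σ := by
  obtain ⟨X, hX, hXP⟩ := h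
  exact ⟨X, cyl_mono σ b hX, hXP⟩

lemma exists_child (σ : List Bool) (h : extn P σ) : ∃ b, extn P (σ ++ [b]) := by
  obtain ⟨X, hX, hXP⟩ := h
  refine ⟨X σ.length, X, ?_, hXP⟩
  intro i hi
  simp only [List.length_append, List.length_singleton] at hi
  rcases lt_or_eq_of_le (Nat.lt_succ_iff.mp hi) with h1 | h1
  · rw [getD_app_left σ _ i h1]
    exact hX i h1
  · subst h1
    rw [getD_app_last]

/-- Level as a Finset. -/
def lvF (n : ℕ) : Finset (List Bool) :=
  ((Finset.univ : Finset (Fin n → Bool)).image List.ofFn).filter (fun σ => extn P σ)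

lemma mem_lvF {n : ℕ} {σ : List Bool} : σ ∈ lvF P n ↔ σ.length = n ∧ extn P σ := by
  simp only [lvF, Finset.mem_filter, Finset.mem_image, Finset.mem_univ, true_and]
  constructor
  · rintro ⟨⟨f, rfl⟩, h⟩; exact ⟨by simp, h⟩
  · rintro ⟨rfl, h⟩
    exact ⟨⟨fun i => σ.get i, List.ofFn_get σ⟩, h⟩

lemma level_eq (n : ℕ) : level P n = ↑(lvF P n) := by
  ext σ; simp [level, mem_lvF]

lemma levelCard_eq (n : ℕ) : levelCard P n = (lvF P n).card := by
  rw [levelCard, level_eq, Set.ncard_coe_finset]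

lemma lvF_card_le (n : ℕ) : (lvF P n).card ≤ 2 ^ n := by
  calc (lvF P n).card ≤ ((Finset.univ : Finset (Fin n → Bool)).image List.ofFn).card :=
        Finset.card_filter_le _ _
    _ ≤ (Finset.univ : Finset (Fin n → Bool)).card := Finset.card_image_le
    _ = 2 ^ n := by simp

/-- Decomposition of level n+1. -/
lemma lvF_succ (n : ℕ) :
    lvF P (n + 1) = (lvF P n).biUnion
      (fun σ => ({σ ++ [false], σ ++ [true]} : Finset (List Bool)).filter (fun τ => extn P τ)) := by
  ext τ
  simp only [Finset.mem_biUnion, Finset.mem_filter, Finset.mem_insert, Finset.mem_singleton,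
    mem_lvF]
  constructor
  · rintro ⟨hlen, hext⟩
    have hne : τ ≠ [] := by intro h; simp [h] at hlen
    have hτ : τ.dropLast ++ [τ.getLast hne] = τ := List.dropLast_append_getLast hne
    refine ⟨τ.dropLast, ⟨by simp [hlen], ?_⟩, ?_, hext⟩
    · rw [← hτ] at hext
      exact extn_of_append P _ _ hext
    · rcases Bool.dichotomy (τ.getLast hne) with h | h
      · left; rw [h] at hτ; exact hτ.symm
      · right; rw [h] at hτ; exact hτ.symm
  · rintro ⟨σ, hσ, hτ | hτ, hext⟩ <;>
      exact ⟨by simp [hτ, hσ.1], hext⟩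

lemma lvF_succ_disj (n : ℕ) : ∀ σ ∈ (lvF P n : Set (List Bool)),
    ∀ σ' ∈ (lvF P n : Set (List Bool)), σ ≠ σ' →
    Disjoint (({σ ++ [false], σ ++ [true]} : Finset (List Bool)).filter (fun τ => extn P τ))
      (({σ' ++ [false], σ' ++ [true]} : Finset (List Bool)).filter (fun τ => extn P τ)) := by
  intro σ _ σ' _ hne
  rw [Finset.disjoint_left]
  intro τ h1 h2
  simp only [Finset.mem_filter, Finset.mem_insert, Finset.mem_singleton] at h1 h2
  apply hne
  rcases h1.1 with h | h <;> rcases h2.1 with h' | h' <;>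
    · rw [h] at h'
      exact (List.append_inj' h' rfl).1

/-- The key identity: ∑_{τ ∈ level n} 2^(n - θ τ) = 2^n. -/
lemma sum_pow (hPne : P.Nonempty) : ∀ n, ∑ τ ∈ lvF P n, 2 ^ (n - theta P τ) = 2 ^ n := by
  intro n
  induction n with
  | zero =>
    have : lvF P 0 = {[]} := by
      ext τ
      simp only [mem_lvF, Finset.mem_singleton, List.length_eq_zero_iff]
      constructor
      · rintro ⟨h, _⟩; exact h
      · rintro rfl
        exact ⟨rfl, hPne.imp fun X hX => ⟨fun i hi => by simp at hi, hX⟩⟩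
    simp [this]
  | succ n ih =>
    rw [lvF_succ, Finset.sum_biUnion (lvF_succ_disj P n)]
    have key : ∀ σ ∈ lvF P n,
        ∑ τ ∈ ({σ ++ [false], σ ++ [true]} : Finset (List Bool)).filter (fun τ => extn P τ),
          2 ^ (n + 1 - theta P τ) = 2 * 2 ^ (n - theta P σ) := by
      intro σ hσ
      obtain ⟨hlen, hext⟩ := (mem_lvF P).mp hσ
      have hθ : theta P σ ≤ n := hlen ▸ theta_le P σ
      have hne' : (σ ++ [false]) ≠ (σ ++ [true]) := by simp
      by_cases h0 : extn P (σ ++ [false]) <;> by_cases h1 : extn P (σ ++ [true])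
      · have e : ({σ ++ [false], σ ++ [true]} : Finset (List Bool)).filter (fun τ => extn P τ)
            = {σ ++ [false], σ ++ [true]} := by
          rw [Finset.filter_eq_self]; intro τ hτ
          simp only [Finset.mem_insert, Finset.mem_singleton] at hτ
          rcases hτ with rfl | rfl <;> assumption
        rw [e, Finset.sum_insert (by simpa using hne'), Finset.sum_singleton,
          theta_append, theta_append]
        simp only [Bool.not_false, Bool.not_true, h0, h1, if_pos]
        have h2 : n + 1 - (theta P σ + 1) = n - theta P σ := by omega
        rw [h2]; ring
      · have e : ({σ ++ [false], σ ++ [true]} : Finset (List Bool)).filter (fun τ => extn P τ)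
            = {σ ++ [false]} := by
          ext τ
          simp only [Finset.mem_filter, Finset.mem_insert, Finset.mem_singleton]
          constructor
          · rintro ⟨rfl | rfl, h⟩
            · rfl
            · exact absurd h h1
          · rintro rfl; exact ⟨Or.inl rfl, h0⟩
        rw [e, Finset.sum_singleton, theta_append]
        simp only [Bool.not_false, h1, if_neg, not_false_iff, add_zero]
        have h2 : n + 1 - theta P σ = (n - theta P σ) + 1 := by omega
        rw [h2, pow_succ]; ring
      · have e : ({σ ++ [false], σ ++ [true]} : Finset (List Bool)).filter (fun τ => extn P τ)
            = {σ ++ [true]} := by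
          ext τ
          simp only [Finset.mem_filter, Finset.mem_insert, Finset.mem_singleton]
          constructor
          · rintro ⟨rfl | rfl, h⟩
            · exact absurd h h0
            · rfl
          · rintro rfl; exact ⟨Or.inr rfl, h1⟩
        rw [e, Finset.sum_singleton, theta_append]
        simp only [Bool.not_true, h0, if_neg, not_false_iff, add_zero]
        have h2 : n + 1 - theta P σ = (n - theta P σ) + 1 := by omega
        rw [h2, pow_succ]; ring
      · exfalso
        obtain ⟨b, hb⟩ := exists_child P σ hext
        cases b
        · exact h0 hb
        · exact h1 hb
    rw [Finset.sum_congr rfl key, ← Finset.mul_sum, ih, ← pow_succ']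

end Aux

theorem stmt5 (P : Set (ℕ → Bool)) (hPne : P.Nonempty) (hPc : IsClosed P) (c : ℕ)
    (hhom : ∀ σ τ : List Bool, extn P σ → extn P τ → σ.length = τ.length →
      |(theta P σ : ℤ) - (theta P τ : ℤ)| ≤ c)
    (n : ℕ) (σ : List Bool) (hσ : σ ∈ level P n) :
    levelCard P n ≤ 2 ^ (theta P σ + c) ∧ 2 ^ theta P σ ≤ levelCard P n * 2 ^ c := by
  obtain ⟨hlen, hext⟩ := hσ
  have hsum := Aux.sum_pow P hPne n
  have hθσ : theta P σ ≤ n := hlen ▸ Aux.theta_le P σ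
  have hN : levelCard P n = (Aux.lvF P n).card := Aux.levelCard_eq P n
  set N := (Aux.lvF P n).card with hNdef
  have hbound : ∀ τ ∈ Aux.lvF P n,
      theta P τ ≤ theta P σ + c ∧ theta P σ ≤ theta P τ + c ∧ theta P τ ≤ n := by
    intro τ hτ
    obtain ⟨hl, he⟩ := (Aux.mem_lvF P).mp hτ
    have h := hhom σ τ hext he (by rw [hlen, hl])
    rw [abs_le] at h
    have hτn : theta P τ ≤ n := hl ▸ Aux.theta_le P τ
    omega
  constructor
  · by_cases hc : theta P σ + c ≤ n
    · have h1 : N * 2 ^ (n - (theta P σ + c)) ≤ 2 ^ n := by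
        rw [← hsum]
        calc N * 2 ^ (n - (theta P σ + c))
            = ∑ _τ ∈ Aux.lvF P n, 2 ^ (n - (theta P σ + c)) := by
              rw [Finset.sum_const, smul_eq_mul]
          _ ≤ ∑ τ ∈ Aux.lvF P n, 2 ^ (n - theta P τ) :=
              Finset.sum_le_sum fun τ hτ => Nat.pow_le_pow_right (by norm_num)
                (Nat.sub_le_sub_left (hbound τ hτ).1 n)
      have h2 : (2 : ℕ) ^ n = 2 ^ (theta P σ + c) * 2 ^ (n - (theta P σ + c)) := by
        rw [← pow_add]; congr 1; omega
      rw [hN]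
      exact Nat.le_of_mul_le_mul_right (h2 ▸ h1) (Nat.pow_pos (by norm_num))
    · rw [hN]
      calc N ≤ 2 ^ n := Aux.lvF_card_le P n
        _ ≤ 2 ^ (theta P σ + c) := Nat.pow_le_pow_right (by norm_num) (by omega)
  · have h1 : 2 ^ n ≤ N * 2 ^ ((n - theta P σ) + c) := by
      rw [← hsum]
      calc ∑ τ ∈ Aux.lvF P n, 2 ^ (n - theta P τ)
          ≤ ∑ _τ ∈ Aux.lvF P n, 2 ^ ((n - theta P σ) + c) :=
            Finset.sum_le_sum fun τ hτ => Nat.pow_le_pow_right (by norm_num)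
              (by have := hbound τ hτ; omega)
        _ = N * 2 ^ ((n - theta P σ) + c) := by rw [Finset.sum_const, smul_eq_mul]
    have h2 : (2 : ℕ) ^ theta P σ * 2 ^ (n - theta P σ) = 2 ^ n := by
      rw [← pow_add]; congr 1; omega
    have h3 : 2 ^ theta P σ * 2 ^ (n - theta P σ) ≤ (N * 2 ^ c) * 2 ^ (n - theta P σ) := by
      rw [h2]
      calc (2:ℕ) ^ n ≤ N * 2 ^ ((n - theta P σ) + c) := h1
        _ = (N * 2 ^ c) * 2 ^ (n - theta P σ) := by rw [pow_add]; ring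
    rw [hN]
    exact Nat.le_of_mul_le_mul_right h3 (Nat.pow_pos (by norm_num))
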